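/- Let $\phi\in C_c^\infty(\mathbb{R}^n)$ with $\hat\phi(0)=1$ (Schwartz decay of $\hat\phi$). Then there exists $C>0$ depending only on $\phi$ such that for all $\lambda\ge1$, all $\tau>0$, all $\zeta\in\mathbb{R}^n$, and all $w\in\mathbb{R}^n$ with $|w|\le1$: $\frac{|1 - e^{i\tau\langle\zeta,w\rangle} + i\tau\langle\zeta,w\rangle\, \hat\phi(\lambda^{-1}\tau\zeta)|}{\tau|\zeta|} \le C \min\Big\{\tau|\zeta|,\ \frac{\lambda}{\tau|\zeta|}\Big\}$, and consequently $\int_0^\infty \frac{|1 - e^{i\tau\langle\zeta,w\rangle} + i\tau\langle\zeta,w\rangle\, \hat\phi(\lambda^{-1}\tau\zeta)|^2}{\tau^2|\zeta|^2}\, \frac{d\tau}{\tau} \le C'\lambda$ for some $C'$ depending only on $\phi$. -/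

import Mathlib

open MeasureTheory Complex
open scoped ENNReal RealInnerProductSpace FourierTransform

set_option maxHeartbeats 4000000

noncomputable def mySchwartz {E : Type*} [NormedAddCommGroup E] [NormedSpace ℝ E]
    (f : E → ℂ) (h1 : ContDiff ℝ (⊤ : ℕ∞) f) (h2 : HasCompactSupport f) : SchwartzMap E ℂ where
  toFun := f
  smooth' := h1
  decay' := by
    intro k m
    have hc : Continuous fun x => ‖x‖ ^ k * ‖iteratedFDeriv ℝ m f x‖ :=
      (continuous_norm.pow k).mul (h1.continuous_iteratedFDeriv (mod_cast le_top)).norm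
    have hs : HasCompactSupport fun x => ‖x‖ ^ k * ‖iteratedFDeriv ℝ m f x‖ :=
      HasCompactSupport.mul_left ((h2.iteratedFDeriv m).norm)
    obtain ⟨C, hC⟩ := hc.bounded_above_of_compact_support hs
    refine ⟨C, fun x => ?_⟩
    have := hC x
    rw [Real.norm_eq_abs] at this
    exact (le_abs_self _).trans this


/-- Fourier multiplier estimate: if `φ ∈ C_c^∞(ℝⁿ)` with `φ̂(0) = 1`, then there are
constants `C, C' > 0` depending only on `φ` such that for all `λ ≥ 1`, `|w| ≤ 1`:
`|1 - e^{iτ⟨ζ,w⟩} + iτ⟨ζ,w⟩ φ̂(λ⁻¹τζ)| / (τ|ζ|) ≤ C min{τ|ζ|, λ/(τ|ζ|)}` for all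
`τ > 0, ζ`, and consequently the square integral in `dτ/τ` is at most `C' λ`. -/
theorem fourier_multiplier_min_bound (n : ℕ) (φ : EuclideanSpace ℝ (Fin n) → ℝ)
    (hφ : ContDiff ℝ (⊤ : ℕ∞) φ) (hφc : HasCompactSupport φ)
    (hφ0 : 𝓕 (fun x => (φ x : ℂ)) 0 = 1) :
    ∃ C C' : ℝ, 0 < C ∧ 0 < C' ∧ ∀ l : ℝ, 1 ≤ l →
      ∀ w : EuclideanSpace ℝ (Fin n), ‖w‖ ≤ 1 →
        (∀ τ : ℝ, 0 < τ → ∀ ζ : EuclideanSpace ℝ (Fin n),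
          ‖1 - Complex.exp (Complex.I * Complex.ofReal (τ * ⟪ζ, w⟫)) +
              Complex.I * Complex.ofReal (τ * ⟪ζ, w⟫) *
                𝓕 (fun x => (φ x : ℂ)) ((l⁻¹ * τ) • ζ)‖ / (τ * ‖ζ‖) ≤
            C * min (τ * ‖ζ‖) (l / (τ * ‖ζ‖))) ∧
        ∀ ζ : EuclideanSpace ℝ (Fin n),
          (∫⁻ τ in Set.Ioi (0 : ℝ),
            ENNReal.ofReal
              (‖1 - Complex.exp (Complex.I * Complex.ofReal (τ * ⟪ζ, w⟫)) +
                  Complex.I * Complex.ofReal (τ * ⟪ζ, w⟫) *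
                    𝓕 (fun x => (φ x : ℂ)) ((l⁻¹ * τ) • ζ)‖ ^ 2 /
                (τ ^ 2 * ‖ζ‖ ^ 2) * τ⁻¹)) ≤
          ENNReal.ofReal (C' * l) := by
  set Φ : EuclideanSpace ℝ (Fin n) → ℂ := fun x => (φ x : ℂ) with hΦdef
  have hΦd : ContDiff ℝ (⊤ : ℕ∞) Φ := Complex.ofRealCLM.contDiff.comp hφ
  have hΦc : HasCompactSupport Φ := hφc.comp_left Complex.ofReal_zero
  set g := mySchwartz Φ hΦd hΦc with hg
  set G := SchwartzMap.fourierTransformCLM ℝ g with hGdef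
  have hG : ⇑G = 𝓕 Φ := rfl
  have hG0 : 𝓕 Φ 0 = 1 := hφ0
  obtain ⟨C₁, hC₁pos, hC₁⟩ := G.decay 1 0
  obtain ⟨L, hLpos, hL⟩ := G.decay 0 1
  have hC₁' : ∀ ξ, ‖ξ‖ * ‖𝓕 Φ ξ‖ ≤ C₁ := by
    intro ξ
    have := hC₁ ξ
    simpa [hG, norm_iteratedFDeriv_zero] using this
  have hL' : ∀ ξ : EuclideanSpace ℝ (Fin n), ‖𝓕 Φ ξ - 1‖ ≤ L * ‖ξ‖ := by
    intro ξ
    have hdiff : ∀ x ∈ Set.univ, DifferentiableAt ℝ (⇑G) x := fun x _ => G.differentiableAt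
    have hbd : ∀ x ∈ Set.univ, ‖fderiv ℝ (⇑G) x‖ ≤ L := by
      intro x _
      have := hL x
      rw [show ‖fderiv ℝ (⇑G) x‖ = ‖iteratedFDeriv ℝ 1 (⇑G) x‖ by rw [← norm_iteratedFDeriv_fderiv, norm_iteratedFDeriv_zero]]; simpa using this
    have h := Convex.norm_image_sub_le_of_norm_fderiv_le hdiff hbd convex_univ
      (Set.mem_univ 0) (Set.mem_univ ξ)
    simpa [hG, hG0] using h
  set C : ℝ := max (3 + L) (2 + C₁) with hCdef
  have hCpos : 0 < C := lt_of_lt_of_le (by linarith) (le_max_left _ _)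
  have key : ∀ l : ℝ, 1 ≤ l → ∀ w : EuclideanSpace ℝ (Fin n), ‖w‖ ≤ 1 →
      ∀ τ : ℝ, 0 < τ → ∀ ζ : EuclideanSpace ℝ (Fin n),
      ‖1 - Complex.exp (Complex.I * Complex.ofReal (τ * ⟪ζ, w⟫)) +
          Complex.I * Complex.ofReal (τ * ⟪ζ, w⟫) *
            𝓕 Φ ((l⁻¹ * τ) • ζ)‖ / (τ * ‖ζ‖) ≤
        C * min (τ * ‖ζ‖) (l / (τ * ‖ζ‖)) := by
    intro l hl w hw τ hτ ζ
    by_cases hζ : ζ = 0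
    · subst hζ
      simp
    have hl0 : (0:ℝ) < l := lt_of_lt_of_le one_pos hl
    have hr : 0 < ‖ζ‖ := norm_pos_iff.mpr hζ
    set r := ‖ζ‖ with hrdef
    set t := τ * r with htdef
    have htpos : 0 < t := mul_pos hτ hr
    set s : ℝ := τ * ⟪ζ, w⟫ with hsdef
    have hs : |s| ≤ t := by
      rw [hsdef, abs_mul, abs_of_pos hτ, htdef]
      refine mul_le_mul_of_nonneg_left ?_ hτ.le
      calc |⟪ζ, w⟫| ≤ r * ‖w‖ := abs_real_inner_le_norm ζ w
        _ ≤ r * 1 := mul_le_mul_of_nonneg_left hw hr.le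
        _ = r := mul_one r
    set ξ : EuclideanSpace ℝ (Fin n) := (l⁻¹ * τ) • ζ with hξdef
    have hξ : ‖ξ‖ = t / l := by
      rw [hξdef, norm_smul, Real.norm_eq_abs, abs_mul, abs_inv, abs_of_pos hl0,
        abs_of_pos hτ, htdef]
      field_simp
      rfl
    set z : ℂ := Complex.I * (s : ℂ) with hzdef
    have hzabs : ‖z‖ = |s| := by
      rw [hzdef]
      simp
    set Fξ := 𝓕 Φ ξ with hFdef
    have he : ‖Complex.exp z‖ = 1 := by
      rw [Complex.norm_exp]
      simp [hzdef]
    have habs1 : ‖Complex.exp z - 1 - z‖ ≤ 3 * t ^ 2 := by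
      rcases le_or_gt (|s|) 1 with h1 | h1
      · have h2 := Complex.norm_exp_sub_one_sub_id_le (x := z)
          (by rw [hzabs]; exact h1)
        rw [hzabs] at h2
        nlinarith [abs_nonneg s, hs]
      · have h2 : ‖Complex.exp z - 1 - z‖ ≤ ‖Complex.exp z - 1‖ + ‖z‖ := norm_sub_le _ _
        have h3 : ‖Complex.exp z - 1‖ ≤ ‖Complex.exp z‖ + ‖(1:ℂ)‖ := norm_sub_le _ _
        rw [he, norm_one] at h3
        rw [hzabs] at h2
        nlinarith
    have hE1 : ‖1 - Complex.exp z + z * Fξ‖ ≤ (3 + L) * t ^ 2 := by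
      have heq : 1 - Complex.exp z + z * Fξ = -(Complex.exp z - 1 - z) + z * (Fξ - 1) := by
        ring
      rw [heq]
      have h2 : ‖-(Complex.exp z - 1 - z) + z * (Fξ - 1)‖ ≤
          ‖Complex.exp z - 1 - z‖ + ‖z‖ * ‖Fξ - 1‖ := by
        refine (norm_add_le _ _).trans ?_
        rw [norm_neg, norm_mul]
      have h3 : ‖Fξ - 1‖ ≤ L * (t / l) := by
        have := hL' ξ
        rw [hξ] at this
        exact this
      have h4 : ‖z‖ * ‖Fξ - 1‖ ≤ t * (L * (t / l)) := by
        apply mul_le_mul (hzabs ▸ hs) h3 (norm_nonneg _) htpos.le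
      have h5 : t * (L * (t / l)) ≤ L * t ^ 2 := by
        have hdl : t / l ≤ t := div_le_self htpos.le hl
        calc t * (L * (t / l)) ≤ t * (L * t) :=
              mul_le_mul_of_nonneg_left (mul_le_mul_of_nonneg_left hdl hLpos.le) htpos.le
          _ = L * t ^ 2 := by ring
      linarith
    have hE2 : ‖1 - Complex.exp z + z * Fξ‖ ≤ (2 + C₁) * l := by
      have h2 : ‖1 - Complex.exp z + z * Fξ‖ ≤ ‖(1:ℂ) - Complex.exp z‖ + ‖z‖ * ‖Fξ‖ := by
        refine (norm_add_le _ _).trans ?_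
        rw [norm_mul]
      have h3 : ‖(1:ℂ) - Complex.exp z‖ ≤ 2 := by
        refine (norm_sub_le _ _).trans ?_
        rw [he, norm_one]; norm_num
      have h4 : ‖z‖ * ‖Fξ‖ ≤ t * ‖Fξ‖ := by
        apply mul_le_mul_of_nonneg_right (hzabs ▸ hs) (norm_nonneg _)
      have h5 : t * ‖Fξ‖ = l * (‖ξ‖ * ‖Fξ‖) := by
        rw [hξ]; field_simp
      have h6 : ‖ξ‖ * ‖Fξ‖ ≤ C₁ := hC₁' ξ
      have h7 : t * ‖Fξ‖ ≤ l * C₁ := by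
        rw [h5]
        exact mul_le_mul_of_nonneg_left h6 hl0.le
      have h8 : (2:ℝ) ≤ 2 * l := by linarith
      linarith
    rcases le_or_gt (t * t) l with hcase | hcase
    · have hmin : min t (l / t) = t := min_eq_left (by rw [le_div_iff₀ htpos]; exact hcase)
      rw [hmin, div_le_iff₀ htpos]
      have hCge : 3 + L ≤ C := le_max_left _ _
      calc ‖1 - Complex.exp z + z * Fξ‖ ≤ (3 + L) * t ^ 2 := hE1
        _ ≤ C * t * t := by nlinarith [htpos, hCge, sq_nonneg t]
    · have hmin : min t (l / t) = l / t := min_eq_right (by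
        rw [div_le_iff₀ htpos]; nlinarith)
      rw [hmin, div_le_iff₀ htpos]
      have hCge : 2 + C₁ ≤ C := le_max_right _ _
      calc ‖1 - Complex.exp z + z * Fξ‖ ≤ (2 + C₁) * l := hE2
        _ = (2 + C₁) * (l / t) * t := by field_simp
        _ ≤ C * (l / t) * t := by
          have hq : 0 < l / t * t := mul_pos (div_pos hl0 htpos) htpos
          nlinarith [hq, hCge]
  -- generic scalar estimates
  have genA : ∀ a τ r : ℝ, 0 ≤ a → 0 < τ → 0 < r → a / (τ * r) ≤ C * (τ * r) →
      a ^ 2 / (τ ^ 2 * r ^ 2) * τ⁻¹ ≤ C ^ 2 * r ^ 2 * τ := by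
    intro a τ r ha hτ hr h1
    have htr : 0 < τ * r := mul_pos hτ hr
    rw [show a ^ 2 / (τ ^ 2 * r ^ 2) * τ⁻¹ = (a / (τ * r)) ^ 2 * τ⁻¹ by
      rw [div_pow, mul_pow]]
    have h2 : (a / (τ * r)) ^ 2 ≤ (C * (τ * r)) ^ 2 :=
      pow_le_pow_left₀ (div_nonneg ha htr.le) h1 2
    calc (a / (τ * r)) ^ 2 * τ⁻¹ ≤ (C * (τ * r)) ^ 2 * τ⁻¹ :=
          mul_le_mul_of_nonneg_right h2 (inv_nonneg.mpr hτ.le)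
      _ = C ^ 2 * r ^ 2 * τ := by
          field_simp
  have genB : ∀ a τ r l : ℝ, 0 ≤ a → 0 < τ → 0 < r → 0 < l →
      a / (τ * r) ≤ C * (l / (τ * r)) →
      a ^ 2 / (τ ^ 2 * r ^ 2) * τ⁻¹ ≤ C ^ 2 * l ^ 2 / r ^ 2 * τ ^ (-3 : ℝ) := by
    intro a τ r l ha hτ hr hl h1
    have htr : 0 < τ * r := mul_pos hτ hr
    rw [show a ^ 2 / (τ ^ 2 * r ^ 2) * τ⁻¹ = (a / (τ * r)) ^ 2 * τ⁻¹ by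
      rw [div_pow, mul_pow]]
    have h2 : (a / (τ * r)) ^ 2 ≤ (C * (l / (τ * r))) ^ 2 :=
      pow_le_pow_left₀ (div_nonneg ha htr.le) h1 2
    have h3 : τ ^ (-3 : ℝ) = (τ ^ (3:ℕ))⁻¹ := by
      rw [show (-3 : ℝ) = -((3:ℕ):ℝ) by norm_num, Real.rpow_neg hτ.le, Real.rpow_natCast]
    calc (a / (τ * r)) ^ 2 * τ⁻¹ ≤ (C * (l / (τ * r))) ^ 2 * τ⁻¹ :=
          mul_le_mul_of_nonneg_right h2 (inv_nonneg.mpr hτ.le)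
      _ = C ^ 2 * l ^ 2 / r ^ 2 * τ ^ (-3 : ℝ) := by
          rw [h3]
          field_simp
  refine ⟨C, C ^ 2, hCpos, by positivity, ?_⟩
  intro l hl w hw
  refine ⟨key l hl w hw, ?_⟩
  intro ζ
  by_cases hζ : ζ = 0
  · subst hζ
    simp
  have hr : 0 < ‖ζ‖ := norm_pos_iff.mpr hζ
  have hl0 : (0:ℝ) < l := lt_of_lt_of_le one_pos hl
  set τ₀ := Real.sqrt l / ‖ζ‖ with hτ₀def
  have hsq : 0 < Real.sqrt l := Real.sqrt_pos.mpr hl0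
  have hτ₀ : 0 < τ₀ := div_pos hsq hr
  have hτ₀sq : τ₀ ^ 2 = l / ‖ζ‖ ^ 2 := by rw [hτ₀def, div_pow, Real.sq_sqrt hl0.le]
  have hA : (∫⁻ τ in Set.Ioc (0:ℝ) τ₀,
      ENNReal.ofReal (‖1 - Complex.exp (Complex.I * Complex.ofReal (τ * ⟪ζ, w⟫)) +
              Complex.I * Complex.ofReal (τ * ⟪ζ, w⟫) *
                𝓕 Φ ((l⁻¹ * τ) • ζ)‖ ^ 2 / (τ ^ 2 * ‖ζ‖ ^ 2) * τ⁻¹)) ≤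
      ENNReal.ofReal (C ^ 2 * l / 2) := by
    have hmono : ∀ τ ∈ Set.Ioc (0:ℝ) τ₀,
        ENNReal.ofReal (‖1 - Complex.exp (Complex.I * Complex.ofReal (τ * ⟪ζ, w⟫)) +
              Complex.I * Complex.ofReal (τ * ⟪ζ, w⟫) *
                𝓕 Φ ((l⁻¹ * τ) • ζ)‖ ^ 2 / (τ ^ 2 * ‖ζ‖ ^ 2) * τ⁻¹) ≤
        ENNReal.ofReal (C ^ 2 * ‖ζ‖ ^ 2 * τ) := by
      intro τ hτ'
      apply ENNReal.ofReal_le_ofReal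
      apply genA _ _ _ (norm_nonneg _) hτ'.1 hr
      exact (key l hl w hw τ hτ'.1 ζ).trans
        (mul_le_mul_of_nonneg_left (min_le_left _ _) hCpos.le)
    calc _ ≤ ∫⁻ τ in Set.Ioc (0:ℝ) τ₀, ENNReal.ofReal (C ^ 2 * ‖ζ‖ ^ 2 * τ) :=
          setLIntegral_mono ((measurable_const.mul measurable_id).ennreal_ofReal) hmono
      _ = ENNReal.ofReal (∫ τ in Set.Ioc (0:ℝ) τ₀, C ^ 2 * ‖ζ‖ ^ 2 * τ) := by
          rw [ofReal_integral_eq_lintegral_ofReal]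
          · exact (continuous_const.mul continuous_id).integrableOn_Ioc
          · filter_upwards [ae_restrict_mem measurableSet_Ioc] with τ hτ'
            exact mul_nonneg (by positivity) hτ'.1.le
      _ = ENNReal.ofReal (C ^ 2 * l / 2) := by
          congr 1
          rw [← intervalIntegral.integral_of_le hτ₀.le,
            intervalIntegral.integral_const_mul, integral_id, hτ₀sq]
          field_simp [hr.ne']
          ring
  have hB : (∫⁻ τ in Set.Ioi τ₀,
      ENNReal.ofReal (‖1 - Complex.exp (Complex.I * Complex.ofReal (τ * ⟪ζ, w⟫)) +
              Complex.I * Complex.ofReal (τ * ⟪ζ, w⟫) *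
                𝓕 Φ ((l⁻¹ * τ) • ζ)‖ ^ 2 / (τ ^ 2 * ‖ζ‖ ^ 2) * τ⁻¹)) ≤
      ENNReal.ofReal (C ^ 2 * l / 2) := by
    have hmono : ∀ τ ∈ Set.Ioi τ₀,
        ENNReal.ofReal (‖1 - Complex.exp (Complex.I * Complex.ofReal (τ * ⟪ζ, w⟫)) +
              Complex.I * Complex.ofReal (τ * ⟪ζ, w⟫) *
                𝓕 Φ ((l⁻¹ * τ) • ζ)‖ ^ 2 / (τ ^ 2 * ‖ζ‖ ^ 2) * τ⁻¹) ≤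
        ENNReal.ofReal (C ^ 2 * l ^ 2 / ‖ζ‖ ^ 2 * τ ^ (-3 : ℝ)) := by
      intro τ hτ'
      have hτp : 0 < τ := hτ₀.trans hτ'
      apply ENNReal.ofReal_le_ofReal
      apply genB _ _ _ _ (norm_nonneg _) hτp hr hl0
      exact (key l hl w hw τ hτp ζ).trans
        (mul_le_mul_of_nonneg_left (min_le_right _ _) hCpos.le)
    calc _ ≤ ∫⁻ τ in Set.Ioi τ₀, ENNReal.ofReal (C ^ 2 * l ^ 2 / ‖ζ‖ ^ 2 * τ ^ (-3 : ℝ)) :=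
          setLIntegral_mono ((measurable_const.mul (measurable_id.pow measurable_const)).ennreal_ofReal) hmono
      _ = ENNReal.ofReal (∫ τ in Set.Ioi τ₀, C ^ 2 * l ^ 2 / ‖ζ‖ ^ 2 * τ ^ (-3 : ℝ)) := by
          rw [ofReal_integral_eq_lintegral_ofReal]
          · exact (integrableOn_Ioi_rpow_of_lt (by norm_num) hτ₀).const_mul _
          · filter_upwards [ae_restrict_mem measurableSet_Ioi] with τ hτ'
            have hτp : 0 < τ := hτ₀.trans hτ'
            exact mul_nonneg (by positivity) (Real.rpow_nonneg hτp.le _)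
      _ = ENNReal.ofReal (C ^ 2 * l / 2) := by
          congr 1
          rw [MeasureTheory.integral_const_mul, integral_Ioi_rpow_of_lt (by norm_num) hτ₀]
          have h9 : τ₀ ^ (-3 + 1 : ℝ) = ‖ζ‖ ^ 2 / l := by
            rw [show (-3 + 1 : ℝ) = -((2:ℕ):ℝ) by norm_num, Real.rpow_neg hτ₀.le,
              Real.rpow_natCast, hτ₀sq, inv_div]
          rw [h9, show (-3 + 1 : ℝ) = -2 by norm_num]
          field_simp [hr.ne', hl0.ne']
  calc _ ≤ ENNReal.ofReal (C ^ 2 * l / 2) + ENNReal.ofReal (C ^ 2 * l / 2) := by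
        rw [← Set.Ioc_union_Ioi_eq_Ioi hτ₀.le,
          lintegral_union measurableSet_Ioi Set.Ioc_disjoint_Ioi_same]
        exact add_le_add hA hB
    _ = ENNReal.ofReal (C ^ 2 * l) := by
        rw [← ENNReal.ofReal_add (by nlinarith [sq_nonneg C]) (by nlinarith [sq_nonneg C])]
        congr 1
        ring
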